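/- Let X ∈ ℝ^{m×n} with rank(X) = c, partitioned as X = [[X₁₁, X₁₂],[X₂₁, X₂₂]] where the top-left block X₁₁ ∈ ℝ^{c×c} is invertible. Let T = X₁₁⁻¹ X₁₂ ∈ ℝ^{c×(n−c)} and S = X₂₁ X₁₁⁻¹ ∈ ℝ^{(m−c)×c}. Then the matrices I_c + TTᵀ and I_c + SᵀS are invertible, and the Moore–Penrose pseudoinverse of X is X⁺ = [I_c; Tᵀ] (I_c + TTᵀ)⁻¹ X₁₁⁻¹ (I_c + SᵀS)⁻¹ [I_c, Sᵀ], where [I_c; Tᵀ] ∈ ℝ^{n×c} denotes I_c stacked on top of Tᵀ and [I_c, Sᵀ] ∈ ℝ^{c×m} denotes I_c and Sᵀ placed side by side. -/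

import Mathlib

open Matrix

/-- `P` is the Moore–Penrose pseudoinverse of `M`. -/
def IsMoorePenrose {m n : Type*} [Fintype m] [Fintype n]
    (M : Matrix m n ℝ) (P : Matrix n m ℝ) : Prop :=
  M * P * M = M ∧ P * M * P = P ∧ (M * P)ᵀ = M * P ∧ (P * M)ᵀ = P * M

/-- The rank of any submatrix is at most the rank of the matrix. -/
lemma aux_rank_submatrix_le {m n l o : Type*} [Fintype m] [Fintype n] [Fintype l] [Fintype o]
    [DecidableEq m] [DecidableEq n]
    (A : Matrix m n ℝ) (f : l → m) (g : o → n) :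
    (A.submatrix f g).rank ≤ A.rank := by
  have h : A.submatrix f g = ((1 : Matrix m m ℝ).submatrix f (Equiv.refl m)) * A *
      ((1 : Matrix n n ℝ).submatrix (Equiv.refl n) g) := by
    rw [Matrix.mul_submatrix_one, Matrix.one_submatrix_mul]
    simp
  rw [h]
  exact (Matrix.rank_mul_le_left _ _).trans (Matrix.rank_mul_le_right _ _)

/-- If a block matrix with invertible top-left block has rank `c`, its Schur complement
vanishes. -/
lemma aux_schur_eq_zero {c r s : ℕ}
    (X11 : Matrix (Fin c) (Fin c) ℝ) (X12 : Matrix (Fin c) (Fin s) ℝ)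
    (X21 : Matrix (Fin r) (Fin c) ℝ) (X22 : Matrix (Fin r) (Fin s) ℝ)
    (hX11 : IsUnit X11.det)
    (hrank : (Matrix.fromBlocks X11 X12 X21 X22).rank = c) :
    X22 = X21 * X11⁻¹ * X12 := by
  set W : Matrix (Fin r) (Fin s) ℝ := X22 - X21 * X11⁻¹ * X12 with hW
  have e12 : X11 * (X11⁻¹ * X12) = X12 := Matrix.mul_nonsing_inv_cancel_left _ _ hX11
  have e21 : X21 * X11⁻¹ * X11 = X21 := Matrix.nonsing_inv_mul_cancel_right _ _ hX11
  have hNX : Matrix.fromBlocks (1 : Matrix (Fin c) (Fin c) ℝ) 0 (-(X21 * X11⁻¹)) (1 : Matrix (Fin r) (Fin r) ℝ) * Matrix.fromBlocks X11 X12 X21 X22 *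
      Matrix.fromBlocks (1 : Matrix (Fin c) (Fin c) ℝ) (-(X11⁻¹ * X12)) 0 (1 : Matrix (Fin s) (Fin s) ℝ) = Matrix.fromBlocks X11 0 0 W := by
    rw [Matrix.fromBlocks_multiply, Matrix.fromBlocks_multiply]
    simp only [Matrix.one_mul, Matrix.mul_one, Matrix.zero_mul, Matrix.mul_zero,
      add_zero, zero_add, Matrix.neg_mul, Matrix.mul_neg, e12, e21, neg_add_cancel,
      Matrix.zero_mul, neg_zero, zero_add, add_zero]
    rw [hW, sub_eq_add_neg, add_comm X22]
  have hdetN : IsUnit (Matrix.fromBlocks (1 : Matrix (Fin c) (Fin c) ℝ) 0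
      (-(X21 * X11⁻¹)) (1 : Matrix (Fin r) (Fin r) ℝ)).det := by
    rw [Matrix.det_fromBlocks_zero₁₂]; simp
  have hdetM : IsUnit (Matrix.fromBlocks (1 : Matrix (Fin c) (Fin c) ℝ) (-(X11⁻¹ * X12))
      0 (1 : Matrix (Fin s) (Fin s) ℝ)).det := by
    rw [Matrix.det_fromBlocks_zero₂₁]; simp
  have hrk : (Matrix.fromBlocks X11 0 0 W).rank = c := by
    rw [← hNX, Matrix.rank_mul_eq_left_of_isUnit_det _ _ hdetM,
      Matrix.rank_mul_eq_right_of_isUnit_det _ _ hdetN, hrank]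
  have key : W = 0 := by
    by_contra hne
    obtain ⟨i, j, hij⟩ : ∃ i j, W i j ≠ 0 := by
      by_contra h
      push_neg at h
      exact hne (by ext i j; simp [h])
    set f : Fin c ⊕ Unit → Fin c ⊕ Fin r := Sum.elim Sum.inl (fun _ => Sum.inr i) with hf
    set g : Fin c ⊕ Unit → Fin c ⊕ Fin s := Sum.elim Sum.inl (fun _ => Sum.inr j) with hg
    have hE : (Matrix.fromBlocks X11 0 0 W).submatrix f g =
        Matrix.fromBlocks X11 0 0 (Matrix.of fun (_ _ : Unit) => W i j) := by
      ext a b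
      rcases a with a | a <;> rcases b with b | b <;>
        simp [hf, hg, Matrix.fromBlocks]
    have hdetE : IsUnit ((Matrix.fromBlocks X11 0 0
        (Matrix.of fun (_ _ : Unit) => W i j)).det) := by
      have hu : (Matrix.of fun (_ _ : Unit) => W i j).det = W i j := Matrix.det_unique _
      rw [Matrix.det_fromBlocks_zero₂₁, hu]
      exact hX11.mul (isUnit_iff_ne_zero.mpr hij)
    have hcard : ((Matrix.fromBlocks X11 0 0 W).submatrix f g).rank = c + 1 := by
      rw [hE, Matrix.rank_of_isUnit _ ((Matrix.isUnit_iff_isUnit_det _).mpr hdetE)]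
      simp
    have hle := aux_rank_submatrix_le (Matrix.fromBlocks X11 0 0 W) f g
    rw [hcard, hrk] at hle
    omega
  have := sub_eq_zero.mp (hW ▸ key)
  exact this

/-- Partitioned-matrix pseudoinverse: for
`X = [[X₁₁, X₁₂],[X₂₁, X₂₂]]` of rank `c` with `X₁₁ ∈ ℝ^{c×c}` invertible,
putting `T = X₁₁⁻¹ X₁₂` and `S = X₂₁ X₁₁⁻¹`, the matrices `I + T Tᵀ` and
`I + Sᵀ S` are invertible and
`X⁺ = [I; Tᵀ] (I + T Tᵀ)⁻¹ X₁₁⁻¹ (I + Sᵀ S)⁻¹ [I, Sᵀ]`. -/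
theorem pinv_partitioned_matrix {c r s : ℕ}
    (X11 : Matrix (Fin c) (Fin c) ℝ) (X12 : Matrix (Fin c) (Fin s) ℝ)
    (X21 : Matrix (Fin r) (Fin c) ℝ) (X22 : Matrix (Fin r) (Fin s) ℝ)
    (hX11 : IsUnit X11.det)
    (X : Matrix (Fin c ⊕ Fin r) (Fin c ⊕ Fin s) ℝ)
    (hX : X = Matrix.fromBlocks X11 X12 X21 X22)
    (hrank : X.rank = c)
    (T : Matrix (Fin c) (Fin s) ℝ) (hT : T = X11⁻¹ * X12)
    (S : Matrix (Fin r) (Fin c) ℝ) (hS : S = X21 * X11⁻¹) :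
    IsUnit (1 + T * Tᵀ).det ∧ IsUnit (1 + Sᵀ * S).det ∧
      IsMoorePenrose X
        (Matrix.fromRows (1 : Matrix (Fin c) (Fin c) ℝ) Tᵀ *
          (1 + T * Tᵀ)⁻¹ * X11⁻¹ * (1 + Sᵀ * S)⁻¹ *
          Matrix.fromCols (1 : Matrix (Fin c) (Fin c) ℝ) Sᵀ) := by
  -- Positive definiteness of the Gram-type matrices
  have hTT : (1 + T * Tᵀ).PosDef := by
    have : (T * Tᴴ).PosSemidef := Matrix.posSemidef_self_mul_conjTranspose T
    rw [Matrix.conjTranspose_eq_transpose_of_trivial] at this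
    exact Matrix.PosDef.add_posSemidef Matrix.PosDef.one this
  have hSS : (1 + Sᵀ * S).PosDef := by
    have : (Sᴴ * S).PosSemidef := Matrix.posSemidef_conjTranspose_mul_self S
    rw [Matrix.conjTranspose_eq_transpose_of_trivial] at this
    exact Matrix.PosDef.add_posSemidef Matrix.PosDef.one this
  have hTTdet : IsUnit (1 + T * Tᵀ).det := isUnit_iff_ne_zero.mpr hTT.det_pos.ne'
  have hSSdet : IsUnit (1 + Sᵀ * S).det := isUnit_iff_ne_zero.mpr hSS.det_pos.ne'
  refine ⟨hTTdet, hSSdet, ?_⟩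
  -- Set up the rank-factor matrices
  set A : Matrix (Fin c) (Fin c ⊕ Fin s) ℝ := Matrix.fromCols 1 T with hA
  set B : Matrix (Fin c ⊕ Fin r) (Fin c) ℝ := Matrix.fromRows 1 S with hB
  have h12 : X12 = X11 * T := by
    rw [hT, Matrix.mul_nonsing_inv_cancel_left _ _ hX11]
  have h21 : X21 = S * X11 := by
    rw [hS, Matrix.nonsing_inv_mul_cancel_right _ _ hX11]
  have h22 : X22 = S * (X11 * T) := by
    have hschur := aux_schur_eq_zero X11 X12 X21 X22 hX11 (hX ▸ hrank)
    rw [hschur, h12, hS]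
  have hXf : X = B * X11 * A := by
    rw [hX, hB, hA, Matrix.fromRows_mul, Matrix.fromRows_mul, Matrix.one_mul,
      Matrix.mul_fromCols, Matrix.mul_fromCols,
      Matrix.fromRows_fromCols_eq_fromBlocks, h12, h21, h22]
    simp [Matrix.mul_one, Matrix.mul_assoc]
  have hAt : Aᵀ = Matrix.fromRows 1 Tᵀ := by
    rw [hA, Matrix.transpose_fromCols, Matrix.transpose_one]
  have hBt : Bᵀ = Matrix.fromCols 1 Sᵀ := by
    rw [hB, Matrix.transpose_fromRows, Matrix.transpose_one]
  have hAA : A * Aᵀ = 1 + T * Tᵀ := by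
    rw [hAt, hA, Matrix.fromCols_mul_fromRows, Matrix.mul_one]
  have hBB : Bᵀ * B = 1 + Sᵀ * S := by
    rw [hBt, hB, Matrix.fromCols_mul_fromRows, Matrix.mul_one]
  have hAAdet : IsUnit (A * Aᵀ).det := hAA ▸ hTTdet
  have hBBdet : IsUnit (Bᵀ * B).det := hBB ▸ hSSdet
  set P : Matrix (Fin c ⊕ Fin s) (Fin c ⊕ Fin r) ℝ :=
    Aᵀ * (A * Aᵀ)⁻¹ * X11⁻¹ * (Bᵀ * B)⁻¹ * Bᵀ with hP
  have hPeq : Matrix.fromRows (1 : Matrix (Fin c) (Fin c) ℝ) Tᵀ *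
      (1 + T * Tᵀ)⁻¹ * X11⁻¹ * (1 + Sᵀ * S)⁻¹ *
      Matrix.fromCols (1 : Matrix (Fin c) (Fin c) ℝ) Sᵀ = P := by
    rw [hP, hAA, hBB, hAt, hBt]
  rw [hPeq]
  -- Key simplifications
  have hXP : X * P = B * (Bᵀ * B)⁻¹ * Bᵀ := by
    rw [hXf, hP]
    simp only [Matrix.mul_assoc]
    rw [← Matrix.mul_assoc A Aᵀ, Matrix.mul_nonsing_inv_cancel_left _ _ hAAdet,
      Matrix.mul_nonsing_inv_cancel_left _ _ hX11]
  have hPX : P * X = Aᵀ * (A * Aᵀ)⁻¹ * A := by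
    rw [hXf, hP]
    simp only [Matrix.mul_assoc]
    rw [← Matrix.mul_assoc Bᵀ B, Matrix.nonsing_inv_mul_cancel_left _ _ hBBdet,
      Matrix.nonsing_inv_mul_cancel_left _ _ hX11]
  refine ⟨?_, ?_, ?_, ?_⟩
  · -- X * P * X = X
    rw [hXP, hXf]
    simp only [Matrix.mul_assoc]
    rw [← Matrix.mul_assoc Bᵀ B, Matrix.nonsing_inv_mul_cancel_left _ _ hBBdet]
  · -- P * X * P = P
    rw [hPX, hP]
    simp only [Matrix.mul_assoc]
    rw [← Matrix.mul_assoc A Aᵀ, Matrix.mul_nonsing_inv_cancel_left _ _ hAAdet]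
  · -- (X * P)ᵀ = X * P
    rw [hXP]
    simp [Matrix.transpose_mul, Matrix.transpose_transpose,
      Matrix.transpose_nonsing_inv, Matrix.mul_assoc]
  · -- (P * X)ᵀ = P * X
    rw [hPX]
    simp [Matrix.transpose_mul, Matrix.transpose_transpose,
      Matrix.transpose_nonsing_inv, Matrix.mul_assoc]
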